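/- Let n = ∏_{i=1}^{s} p_i^{k_i} and let t, x be positive integers with gcd(σ_x(n)+t, n^x) = 1. Suppose there exists j with 1 ≤ j ≤ s such that p_j^x < (1/t)·σ_x(n/p_j^{k_j}), and σ_x(p_j^{k_j}) has a divisor of the form d^x > 1 (d a positive integer) with gcd(d^x, n^x·t) = 1. Then (σ_x(n)+t)/n^x is an x-th abundancy outlaw. -/
import Mathlib


open Finset Nat

/-- Sum of x-th powers of divisors. -/
def sigmaX (x n : ℕ) : ℕ := ∑ d ∈ n.divisors, d ^ x

/-- The x-th abundancy index as a rational number. -/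
def Iq (x n : ℕ) : ℚ := (sigmaX x n : ℚ) / (n : ℚ) ^ x

lemma sigmaX_eq (x n : ℕ) : sigmaX x n = ArithmeticFunction.sigma x n := by
  rw [ArithmeticFunction.sigma_apply]; rfl

lemma sigmaX_mul (x : ℕ) {a b : ℕ} (h : Nat.Coprime a b) :
    sigmaX x (a * b) = sigmaX x a * sigmaX x b := by
  simp only [sigmaX_eq]
  exact ArithmeticFunction.isMultiplicative_sigma.map_mul_of_coprime h

lemma sigmaX_pos (x : ℕ) {m : ℕ} (hm : 0 < m) : 0 < sigmaX x m := by
  unfold sigmaX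
  apply Finset.sum_pos
  · intro d hd; exact pow_pos (Nat.pos_of_mem_divisors hd) x
  · exact ⟨1, Nat.one_mem_divisors.mpr hm.ne'⟩

lemma sigmaX_prime_pow (x : ℕ) {P : ℕ} (hP : P.Prime) (K : ℕ) :
    sigmaX x (P ^ K) = ∑ i ∈ Finset.range (K + 1), (P ^ x) ^ i := by
  unfold sigmaX
  rw [Nat.divisors_prime_pow hP, Finset.sum_map]
  exact Finset.sum_congr rfl fun i _ => by simp [← pow_mul, Nat.mul_comm]

lemma sigmaX_prime (x : ℕ) {r : ℕ} (hr : r.Prime) : sigmaX x r = 1 + r ^ x := by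
  unfold sigmaX
  rw [hr.divisors]
  rw [Finset.sum_pair hr.one_lt.ne]
  simp

lemma Iq_eq_sum (x : ℕ) {m : ℕ} (hm : 0 < m) :
    Iq x m = ∑ d ∈ m.divisors, ((d : ℚ) ^ x)⁻¹ := by
  unfold Iq sigmaX
  rw [Nat.cast_sum, Finset.sum_div,
    ← Nat.sum_div_divisors m (fun d => ((d : ℚ) ^ x)⁻¹)]
  refine Finset.sum_congr rfl fun d hd => ?_
  obtain ⟨hdvd, hm0⟩ := Nat.mem_divisors.mp hd
  have hd0 : d ≠ 0 := fun h => hm0 (by simpa [h] using hdvd)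
  have hcast : ((m / d : ℕ) : ℚ) = (m : ℚ) / d :=
    Nat.cast_div hdvd (by exact_mod_cast hd0)
  rw [hcast, div_pow, inv_div]
  push_cast
  ring

lemma Iq_mono (x : ℕ) {a b : ℕ} (ha : 0 < a) (hba : b ∣ a) : Iq x b ≤ Iq x a := by
  have hb : 0 < b := Nat.pos_of_dvd_of_pos hba ha
  rw [Iq_eq_sum x ha, Iq_eq_sum x hb]
  refine Finset.sum_le_sum_of_subset_of_nonneg
    (Nat.divisors_subset_of_dvd ha.ne' hba) (fun i _ _ => by positivity)

set_option maxHeartbeats 1000000 in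
theorem stmt_12 (x t s : ℕ) (hx : 0 < x) (ht : 0 < t) (hs : 0 < s)
    (p : Fin s → ℕ) (k : Fin s → ℕ)
    (hp : ∀ i, (p i).Prime) (hinj : Function.Injective p) (hk : ∀ i, 0 < k i)
    (n : ℕ) (hn : n = ∏ i, p i ^ k i)
    (hcop : Nat.gcd (sigmaX x n + t) (n ^ x) = 1)
    (j : Fin s)
    (hpj : (p j : ℚ) ^ x < (1 / (t : ℚ)) * (sigmaX x (n / p j ^ k j) : ℚ))
    (d : ℕ) (hd1 : 1 < d ^ x) (hddvd : d ^ x ∣ sigmaX x (p j ^ k j))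
    (hdnt : Nat.gcd (d ^ x) (n ^ x * t) = 1) :
    ¬ ∃ a : ℕ, 0 < a ∧ Iq x a = (sigmaX x n + t : ℚ) / (n : ℚ) ^ x := by
  rintro ⟨a, ha, hIa⟩
  set P := p j with hPdef
  set K := k j with hKdef
  have hPprime : P.Prime := hp j
  -- the complementary part M
  set M := ∏ i ∈ Finset.univ.erase j, p i ^ k i with hMdef
  have hnPM : n = P ^ K * M := by
    rw [hn, ← Finset.mul_prod_erase Finset.univ _ (Finset.mem_univ j)]
  have hMpos : 0 < M := Finset.prod_pos fun i _ => pow_pos (hp i).pos _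
  have hPM : ¬ P ∣ M := by
    intro h
    obtain ⟨i, hi, hdvd⟩ := (Nat.Prime.prime hPprime).dvd_finset_prod_iff _ |>.mp h
    have hPi : P ∣ p i := hPprime.dvd_of_dvd_pow hdvd
    have : P = p i := ((Nat.prime_dvd_prime_iff_eq hPprime (hp i)).mp hPi)
    exact (Finset.mem_erase.mp hi).1 (hinj this.symm)
  have hnpos : 0 < n := by
    rw [hnPM]; exact Nat.mul_pos (pow_pos hPprime.pos K) hMpos
  have copPM : Nat.Coprime P M := (hPprime.coprime_iff_not_dvd).mpr hPM
  -- abbreviations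
  set SP := sigmaX x (P ^ K) with hSPdef
  set SM := sigmaX x M with hSMdef
  have hSPpos : 0 < SP := sigmaX_pos x (pow_pos hPprime.pos K)
  have hSMpos : 0 < SM := sigmaX_pos x hMpos
  have hS : sigmaX x n = SP * SM := by rw [hnPM]; exact sigmaX_mul x (copPM.pow_left K)
  -- rewrite hpj
  have hdivM : n / P ^ K = M := by
    rw [hnPM]; exact Nat.mul_div_cancel_left M (pow_pos hPprime.pos K)
  rw [hdivM] at hpj
  have htQ : (0 : ℚ) < t := by exact_mod_cast ht
  have hq1 : (P : ℚ) ^ x * t < (SM : ℚ) := by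
    rw [one_div, inv_mul_eq_div] at hpj
    exact (lt_div_iff₀ htQ).mp hpj
  have htPx : P ^ x * t < SM := by exact_mod_cast hq1
  -- the key equation
  have haxQ : ((a : ℚ)) ^ x ≠ 0 := by positivity
  have hnxQ : ((n : ℚ)) ^ x ≠ 0 := by
    have : (0:ℚ) < (n:ℚ) := by exact_mod_cast hnpos
    positivity
  unfold Iq at hIa
  rw [div_eq_div_iff haxQ hnxQ] at hIa
  have keyN : sigmaX x a * n ^ x = (sigmaX x n + t) * a ^ x := by exact_mod_cast hIa
  -- n ∣ a
  have hnxdvd : n ^ x ∣ (sigmaX x n + t) * a ^ x := ⟨sigmaX x a, by rw [← keyN]; ring⟩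
  have hnadvd : n ^ x ∣ a ^ x :=
    (Nat.Coprime.symm hcop).dvd_of_dvd_mul_left hnxdvd
  have hna : n ∣ a := (Nat.pow_dvd_pow_iff hx.ne').mp hnadvd
  have hPKn : P ^ K ∣ n := ⟨M, hnPM⟩
  have hPKa : P ^ K ∣ a := hPKn.trans hna
  have hKe : K ≤ a.factorization P :=
    (Nat.Prime.pow_dvd_iff_le_factorization hPprime ha.ne').mp hPKa
  -- generic: target value
  have htarget : Iq x a = ((sigmaX x n : ℚ) + t) / (n : ℚ) ^ x := by
    unfold Iq
    rw [div_eq_div_iff haxQ hnxQ]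
    exact_mod_cast keyN
  rcases eq_or_lt_of_le hKe with heq | hlt
  · -- exponent exactly K
    set c := a / P ^ K with hcdef
    have hac : P ^ K * c = a := Nat.mul_div_cancel' hPKa
    have hPc : ¬ P ∣ c := by
      intro h
      have h2 : P ^ (K + 1) ∣ a := by
        rw [← hac, pow_succ]
        exact mul_dvd_mul dvd_rfl h
      have := (Nat.Prime.pow_dvd_iff_le_factorization hPprime ha.ne').mp h2
      omega
    have copPc : Nat.Coprime (P ^ K) c :=
      Nat.Coprime.pow_left K ((hPprime.coprime_iff_not_dvd).mpr hPc)
    have hσa : sigmaX x a = SP * sigmaX x c := by rw [← hac]; exact sigmaX_mul x copPc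
    have hdσa : d ^ x ∣ sigmaX x a := hσa ▸ Dvd.dvd.mul_right hddvd _
    by_cases hg : Nat.gcd d a = 1
    · -- coprime case : d^x ∣ t, contradiction
      have copda : Nat.Coprime d a := hg
      have copdx : Nat.Coprime (d ^ x) (a ^ x) := Nat.Coprime.pow x x copda
      have h1 : d ^ x ∣ (sigmaX x n + t) * a ^ x := by
        rw [← keyN]; exact Dvd.dvd.mul_right hdσa _
      have hdSt : d ^ x ∣ sigmaX x n + t := copdx.dvd_of_dvd_mul_right h1
      have hdS : d ^ x ∣ sigmaX x n := by rw [hS]; exact Dvd.dvd.mul_right hddvd _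
      have hdt : d ^ x ∣ t := by
        have := Nat.dvd_sub hdSt hdS
        simpa using this
      have : d ^ x ∣ Nat.gcd (d ^ x) (n ^ x * t) :=
        Nat.dvd_gcd dvd_rfl (hdt.trans (dvd_mul_left t (n ^ x)))
      rw [hdnt] at this
      exact absurd (Nat.dvd_one.mp this) (by omega)
    · -- a prime r divides gcd d a
      obtain ⟨r, hr, hrg⟩ := Nat.exists_prime_and_dvd hg
      have hrd : r ∣ d := hrg.trans (Nat.gcd_dvd_left _ _)
      have hra : r ∣ a := hrg.trans (Nat.gcd_dvd_right _ _)
      have hrn : ¬ r ∣ n := by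
        intro h
        have h1 : r ∣ d ^ x := dvd_pow hrd hx.ne'
        have h2 : r ∣ n ^ x * t := Dvd.dvd.mul_right (dvd_pow h hx.ne') t
        have : r ∣ Nat.gcd (d ^ x) (n ^ x * t) := Nat.dvd_gcd h1 h2
        rw [hdnt] at this
        exact hr.one_lt.ne' (Nat.dvd_one.mp this)
      have copnr : Nat.Coprime n r :=
        Nat.coprime_comm.mp ((hr.coprime_iff_not_dvd).mpr hrn)
      have hnra : n * r ∣ a := copnr.mul_dvd_of_dvd_of_dvd hna hra
      -- size contradiction
      have hd0 : 0 < d := by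
        rcases Nat.eq_zero_or_pos d with h | h
        · subst h; rw [zero_pow hx.ne'] at hd1; omega
        · exact h
      have hrled : r ≤ d := Nat.le_of_dvd hd0 hrd
      have hdSP : d ^ x ≤ SP := Nat.le_of_dvd hSPpos hddvd
      have htSM : t < SM := by
        have : t ≤ P ^ x * t := Nat.le_mul_of_pos_left t (pow_pos hPprime.pos x)
        omega
      have hcoreN : t * r ^ x < sigmaX x n := by
        calc t * r ^ x ≤ t * SP := Nat.mul_le_mul_left t
              ((Nat.pow_le_pow_left hrled x).trans hdSP)
          _ < SM * SP := by
              exact (Nat.mul_lt_mul_right hSPpos).mpr htSM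
          _ = sigmaX x n := by rw [hS, Nat.mul_comm]
      have hcore : (t : ℚ) * (r : ℚ) ^ x < (sigmaX x n : ℚ) := by exact_mod_cast hcoreN
      have hσnr : sigmaX x (n * r) = sigmaX x n * (1 + r ^ x) := by
        rw [sigmaX_mul x copnr, sigmaX_prime x hr]
      have hmono : Iq x (n * r) ≤ Iq x a := Iq_mono x ha hnra
      have hnrpos : 0 < n * r := Nat.mul_pos hnpos hr.pos
      have hlt2 : ((sigmaX x n : ℚ) + t) / (n : ℚ) ^ x < Iq x (n * r) := by
        unfold Iq
        rw [hσnr]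
        have hposq : (0:ℚ) < ((n * r : ℕ) : ℚ) ^ x := by
          have : (0:ℚ) < ((n*r : ℕ):ℚ) := by exact_mod_cast hnrpos
          positivity
        have hposn : (0:ℚ) < (n : ℚ) ^ x := by
          have : (0:ℚ) < (n:ℚ) := by exact_mod_cast hnpos
          positivity
        rw [div_lt_div_iff₀ hposn hposq]
        have h1 : t * r ^ x * n ^ x < sigmaX x n * n ^ x :=
          mul_lt_mul_of_pos_right hcoreN (pow_pos hnpos x)
        have hNineq : (sigmaX x n + t) * (n * r) ^ x
            < sigmaX x n * (1 + r ^ x) * n ^ x := by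
          calc (sigmaX x n + t) * (n * r) ^ x
              = sigmaX x n * n ^ x * r ^ x + t * r ^ x * n ^ x := by
                rw [mul_pow]; ring
            _ < sigmaX x n * n ^ x * r ^ x + sigmaX x n * n ^ x :=
                Nat.add_lt_add_left h1 _
            _ = sigmaX x n * (1 + r ^ x) * n ^ x := by ring
        exact_mod_cast hNineq
      rw [htarget] at hmono
      linarith
  · -- exponent > K : n * P divides a
    have hPK1a : P ^ (K + 1) ∣ a :=
      (Nat.Prime.pow_dvd_iff_le_factorization hPprime ha.ne').mpr hlt
    have hMn : M ∣ n := Dvd.intro_left _ hnPM.symm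
    have hMa : M ∣ a := hMn.trans hna
    have copMP1 : Nat.Coprime M (P ^ (K + 1)) :=
      Nat.Coprime.pow_right (K + 1) copPM.symm
    have hnPa : n * P ∣ a := by
      have h1 : M * P ^ (K + 1) ∣ a := copMP1.mul_dvd_of_dvd_of_dvd hMa hPK1a
      have h2 : n * P = M * P ^ (K + 1) := by rw [hnPM]; ring
      rw [h2]; exact h1
    have hσnP : sigmaX x (n * P) = SM * sigmaX x (P ^ (K + 1)) := by
      have h2 : n * P = M * P ^ (K + 1) := by rw [hnPM]; ring
      rw [h2, sigmaX_mul x copMP1]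
    have hmono : Iq x (n * P) ≤ Iq x a := Iq_mono x ha hnPa
    set Px : ℚ := (P : ℚ) ^ x with hPxdef
    have hgeom : (SP : ℚ) * (Px - 1) = Px ^ (K + 1) - 1 := by
      have h1 := geom_sum_mul Px (K + 1)
      have h2 : (SP : ℚ) = ∑ i ∈ Finset.range (K + 1), Px ^ i := by
        rw [hSPdef, sigmaX_prime_pow x hPprime K]
        push_cast
        rfl
      rw [h2]; exact h1
    have hSP1 : (sigmaX x (P ^ (K + 1)) : ℚ) = (SP : ℚ) + Px ^ (K + 1) := by
      rw [sigmaX_prime_pow x hPprime (K + 1), Finset.sum_range_succ, hSPdef,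
        sigmaX_prime_pow x hPprime K]
      push_cast
      rfl
    have hnxpos : (0:ℚ) < (n : ℚ) ^ x := by
      have : (0:ℚ) < (n:ℚ) := by exact_mod_cast hnpos
      positivity
    have hcore : ((sigmaX x n : ℚ) + t) * Px < (SM : ℚ) * ((SP : ℚ) + Px ^ (K + 1)) := by
      have hSq : (sigmaX x n : ℚ) = (SP : ℚ) * SM := by exact_mod_cast hS
      have hgeomM : (SM : ℚ) * ((SP : ℚ) * (Px - 1)) = (SM : ℚ) * (Px ^ (K + 1) - 1) := by
        rw [hgeom]
      nlinarith [hgeomM, hq1, hSq]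

    have hlt2 : ((sigmaX x n : ℚ) + t) / (n : ℚ) ^ x < Iq x (n * P) := by
      unfold Iq
      rw [hσnP]
      have hposq : (0:ℚ) < ((n * P : ℕ) : ℚ) ^ x := by
        have : (0:ℚ) < ((n*P : ℕ):ℚ) := by
          exact_mod_cast Nat.mul_pos hnpos hPprime.pos
        positivity
      rw [div_lt_div_iff₀ hnxpos hposq]
      have hc1 : ((n * P : ℕ) : ℚ) ^ x = (n : ℚ) ^ x * Px := by
        rw [Nat.cast_mul, mul_pow]
      have hc2 : ((SM * sigmaX x (P ^ (K + 1)) : ℕ) : ℚ)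
          = (SM : ℚ) * (sigmaX x (P ^ (K + 1)) : ℚ) := Nat.cast_mul _ _
      rw [hc1, hc2, hSP1]
      calc ((sigmaX x n : ℚ) + t) * ((n : ℚ) ^ x * Px)
          = ((sigmaX x n : ℚ) + t) * Px * (n : ℚ) ^ x := by ring
        _ < (SM : ℚ) * ((SP : ℚ) + Px ^ (K + 1)) * (n : ℚ) ^ x :=
            mul_lt_mul_of_pos_right hcore hnxpos
    rw [htarget] at hmono
    linarith
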